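/- arXiv:1507.00638 — 3 statements merged into one kernel-verified Lean document; each statement's English description precedes it below -/
import Mathlib

section
/- The core of the inner mapping group Inn(L) in the multiplication group Mult(L) of a loop L is trivial; that is, the only normal subgroup of Mult(L) contained in Inn(L) is the identity subgroup. -/
open Pointwise

/-- A loop: a binary system with identity in which left and right
translations are uniquely invertible. -/
class LoopStr (L : Type*) extends Mul L, One L where
  one_mul : ∀ a : L, 1 * a = a
  mul_one : ∀ a : L, a * 1 = a
  existsUnique_ldiv : ∀ a b : L, ∃! y, a * y = b
  existsUnique_rdiv : ∀ a b : L, ∃! x, x * a = b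

variable {L : Type*} [LoopStr L]

/-- The left translation `λ_a : y ↦ a * y` as a permutation of `L`. -/
noncomputable def leftT (a : L) : Equiv.Perm L :=
  Equiv.ofBijective (fun y => a * y)
    ⟨fun y₁ y₂ h => by
      obtain ⟨y, -, hu⟩ := LoopStr.existsUnique_ldiv a (a * y₂)
      exact (hu y₁ h).trans (hu y₂ rfl).symm,
     fun b => (LoopStr.existsUnique_ldiv a b).exists⟩

/-- The right translation `ρ_a : y ↦ y * a` as a permutation of `L`. -/
noncomputable def rightT (a : L) : Equiv.Perm L :=
  Equiv.ofBijective (fun y => y * a)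
    ⟨fun y₁ y₂ h => by
      obtain ⟨y, -, hu⟩ := LoopStr.existsUnique_rdiv a (y₂ * a)
      exact (hu y₁ h).trans (hu y₂ rfl).symm,
     fun b => (LoopStr.existsUnique_rdiv a b).exists⟩

/-- The multiplication group `Mult(L)`: the subgroup of `Perm L` generated by
all left and right translations. -/
noncomputable def MultL (L : Type*) [LoopStr L] : Subgroup (Equiv.Perm L) :=
  Subgroup.closure {f | ∃ a : L, f = leftT a ∨ f = rightT a}

/-- The inner mapping group `Inn(L)`: the stabilizer of the identity in `Mult(L)`. -/
noncomputable def InnL (L : Type*) [LoopStr L] : Subgroup (Equiv.Perm L) :=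
  MultL L ⊓ MulAction.stabilizer (Equiv.Perm L) (1 : L)

/-- Left division: the unique `y` with `a * y = b`. -/
noncomputable def ldivL (a b : L) : L := (LoopStr.existsUnique_ldiv a b).choose

/-- Right division: the unique `x` with `x * a = b`. -/
noncomputable def rdivL (b a : L) : L := (LoopStr.existsUnique_rdiv a b).choose

theorem core_of_inn_trivial (N : Subgroup (Equiv.Perm L))
    (hK : N ≤ MultL L) (hS : N ≤ InnL L)
    (hnormal : ∀ g ∈ MultL L, ∀ n ∈ N, g * n * g⁻¹ ∈ N) :
    N = ⊥ := by
  refine (Subgroup.eq_bot_iff_forall N).2 fun n hn => ?_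
  have hfix : ∀ m ∈ N, m (1 : L) = 1 := by
    intro m hm
    have := (hS hm).2
    simpa [MulAction.mem_stabilizer_iff, Equiv.Perm.smul_def] using this
  ext a
  have hmem : rightT a ∈ MultL L :=
    Subgroup.subset_closure ⟨a, Or.inr rfl⟩
  have hinv : (rightT a)⁻¹ ∈ MultL L := (MultL L).inv_mem hmem
  have hconj : (rightT a)⁻¹ * n * ((rightT a)⁻¹)⁻¹ ∈ N := hnormal _ hinv n hn
  have h1 : ((rightT a)⁻¹ * n * ((rightT a)⁻¹)⁻¹) (1 : L) = 1 := hfix _ hconj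
  simp only [inv_inv, Equiv.Perm.mul_apply] at h1
  have hra : (rightT a) (1 : L) = a := by
    show (1 : L) * a = a
    exact LoopStr.one_mul a
  rw [hra] at h1
  have := congrArg (rightT a) h1
  rw [show (rightT a) ((rightT a)⁻¹ (n a)) = n a from (rightT a).apply_symm_apply (n a)] at this
  rw [Equiv.Perm.one_apply, this, hra]
end

section
/- If a group K is isomorphic to the multiplication group of a loop L, then there exists a subgroup S ≤ K with trivial core in K and S-connected left transversals A and B to S in K such that K = ⟨A ∪ B⟩. -/
open Pointwise

variable {L : Type*} [LoopStr L]

/-- `T` is a left transversal to the subgroup `S` of `G`: every left coset of `S`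
contains exactly one element of `T`. -/
def IsLeftTransversalTo {G : Type*} [Group G] (T : Set G) (S : Subgroup G) : Prop :=
  ∀ g : G, ∃! t, t ∈ T ∧ g⁻¹ * t ∈ S

lemma leftT_apply (a y : L) : leftT a y = a * y := rfl

lemma rightT_apply (a y : L) : rightT a y = y * a := rfl

lemma leftT_mem (a : L) : leftT a ∈ MultL L :=
  Subgroup.subset_closure ⟨a, Or.inl rfl⟩

lemma rightT_mem (a : L) : rightT a ∈ MultL L :=
  Subgroup.subset_closure ⟨a, Or.inr rfl⟩

lemma leftT_one (a : L) : leftT a 1 = a := LoopStr.mul_one a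

lemma mem_InnL_iff {p : Equiv.Perm L} :
    p ∈ InnL L ↔ p ∈ MultL L ∧ p 1 = 1 := by
  simp [InnL, MulAction.mem_stabilizer_iff, Equiv.Perm.smul_def]

theorem kepka_niemenmaa_necessity {K : Type*} [Group K]
    (φ : K ≃* MultL L) :
    ∃ (S : Subgroup K) (A B : Set K),
      S.normalCore = ⊥ ∧
      IsLeftTransversalTo A S ∧ IsLeftTransversalTo B S ∧
      (∀ a ∈ A, ∀ b ∈ B, a⁻¹ * b⁻¹ * a * b ∈ S) ∧
      Subgroup.closure (A ∪ B) = ⊤ := by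
  classical
  set S : Subgroup K :=
    Subgroup.comap φ.toMonoidHom ((InnL L).subgroupOf (MultL L)) with hSdef
  have hSmem : ∀ k : K, k ∈ S ↔ ((φ k : Equiv.Perm L)) 1 = 1 := by
    intro k
    rw [hSdef, Subgroup.mem_comap, Subgroup.mem_subgroupOf]
    constructor
    · intro h; exact (mem_InnL_iff.mp h).2
    · intro h; exact mem_InnL_iff.mpr ⟨(φ.toMonoidHom k).2, h⟩
  set A : Set K := {k | ∃ a : L, (φ k : Equiv.Perm L) = leftT a} with hAdef
  set B : Set K := {k | ∃ a : L, (φ k : Equiv.Perm L) = rightT a} with hBdef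
  -- uniqueness of the transversal element over a coset
  have coe_mul : ∀ x y : MultL L, ((x * y : MultL L) : Equiv.Perm L) = x * y :=
    fun _ _ => rfl
  have coe_inv : ∀ x : MultL L, ((x⁻¹ : MultL L) : Equiv.Perm L) = (x : Equiv.Perm L)⁻¹ :=
    fun _ => rfl
  have transA : IsLeftTransversalTo A S := by
    intro g
    refine ⟨φ.symm ⟨leftT ((φ g : Equiv.Perm L) 1), leftT_mem _⟩,
      ⟨⟨(φ g : Equiv.Perm L) 1, by simp⟩, ?_⟩, ?_⟩
    · rw [hSmem]
      rw [map_mul, map_inv, coe_mul, coe_inv]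
      simp only [MulEquiv.apply_symm_apply]
      rw [Equiv.Perm.mul_apply]
      show ((φ g : Equiv.Perm L))⁻¹ (leftT _ 1) = 1
      rw [leftT_one, Equiv.Perm.inv_def, Equiv.symm_apply_apply]
    · rintro t ⟨⟨a, ha⟩, hts⟩
      rw [hSmem, map_mul, map_inv, coe_mul, coe_inv, Equiv.Perm.mul_apply, ha] at hts
      have : leftT a 1 = (φ g : Equiv.Perm L) 1 := by
        have := congrArg (φ g : Equiv.Perm L) hts
        rwa [Equiv.Perm.inv_def, Equiv.apply_symm_apply] at this
      rw [leftT_one] at this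
      apply φ.injective
      rw [MulEquiv.apply_symm_apply]
      ext : 1
      rw [ha, this]
  have transB : IsLeftTransversalTo B S := by
    intro g
    refine ⟨φ.symm ⟨rightT ((φ g : Equiv.Perm L) 1), rightT_mem _⟩,
      ⟨⟨(φ g : Equiv.Perm L) 1, by simp⟩, ?_⟩, ?_⟩
    · rw [hSmem]
      rw [map_mul, map_inv, coe_mul, coe_inv]
      simp only [MulEquiv.apply_symm_apply]
      rw [Equiv.Perm.mul_apply]
      show ((φ g : Equiv.Perm L))⁻¹ (rightT _ 1) = 1
      rw [show rightT ((φ g : Equiv.Perm L) 1) 1 = (φ g : Equiv.Perm L) 1 from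
        LoopStr.one_mul _, Equiv.Perm.inv_def, Equiv.symm_apply_apply]
    · rintro t ⟨⟨a, ha⟩, hts⟩
      rw [hSmem, map_mul, map_inv, coe_mul, coe_inv, Equiv.Perm.mul_apply, ha] at hts
      have : rightT a 1 = (φ g : Equiv.Perm L) 1 := by
        have := congrArg (φ g : Equiv.Perm L) hts
        rwa [Equiv.Perm.inv_def, Equiv.apply_symm_apply] at this
      rw [show rightT a 1 = a from LoopStr.one_mul a] at this
      apply φ.injective
      rw [MulEquiv.apply_symm_apply]
      ext : 1
      rw [ha, this]
  refine ⟨S, A, B, ?_, transA, transB, ?_, ?_⟩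
  · -- trivial core
    rw [eq_bot_iff]
    intro k hk
    have hconj : ∀ b : K, b * k * b⁻¹ ∈ S := hk
    have hfix : ∀ x : L, (φ k : Equiv.Perm L) x = x := by
      intro x
      have h := hconj (φ.symm ⟨(leftT x)⁻¹, inv_mem (leftT_mem x)⟩)
      rw [hSmem, map_mul, map_mul, map_inv, coe_mul, coe_mul, coe_inv] at h
      simp only [MulEquiv.apply_symm_apply] at h
      simp only [inv_inv] at h
      rw [Equiv.Perm.mul_apply, Equiv.Perm.mul_apply] at h
      rw [leftT_one] at h
      have := congrArg (leftT x) h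
      rwa [Equiv.Perm.inv_def, Equiv.apply_symm_apply, leftT_one] at this
    have : (φ k : Equiv.Perm L) = 1 := Equiv.ext fun x => hfix x
    have hk1 : φ k = 1 := Subtype.ext this
    have : k = 1 := by
      have := congrArg φ.symm hk1
      rwa [MulEquiv.symm_apply_apply, map_one] at this
    simp [this]
  · -- commutators
    rintro a ⟨u, hu⟩ b ⟨v, hv⟩
    rw [hSmem]
    rw [map_mul, map_mul, map_mul, map_inv, map_inv, coe_mul, coe_mul, coe_mul,
      coe_inv, coe_inv, hu, hv]
    rw [Equiv.Perm.mul_apply, Equiv.Perm.mul_apply, Equiv.Perm.mul_apply]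
    rw [show rightT v 1 = v from LoopStr.one_mul v, leftT_apply]
    rw [show (rightT v)⁻¹ (u * v) = u from by
      rw [Equiv.Perm.inv_eq_iff_eq]; rfl]
    rw [Equiv.Perm.inv_eq_iff_eq, leftT_one]
  · -- generation
    rw [eq_top_iff]
    intro k _
    have hmem : (φ k : Equiv.Perm L) ∈ MultL L := (φ k).2
    have key : ∀ (p : Equiv.Perm L) (hp : p ∈ MultL L),
        φ.symm ⟨p, hp⟩ ∈ Subgroup.closure (A ∪ B) := by
      intro p hp
      induction hp using Subgroup.closure_induction with
      | mem x hx =>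
        obtain ⟨a, h⟩ := hx
        apply Subgroup.subset_closure
        rcases h with h | h
        · exact Or.inl ⟨a, by simp [h]⟩
        · exact Or.inr ⟨a, by simp [h]⟩
      | one =>
        have : φ.symm ⟨(1 : Equiv.Perm L), one_mem _⟩ = 1 := map_one φ.symm
        rw [this]; exact one_mem _
      | mul x y hx hy ihx ihy =>
        have : (⟨x * y, mul_mem hx hy⟩ : MultL L) = ⟨x, hx⟩ * ⟨y, hy⟩ := rfl
        rw [this, map_mul]
        exact mul_mem ihx ihy
      | inv x hx ihx =>
        have : (⟨x⁻¹, inv_mem hx⟩ : MultL L) = (⟨x, hx⟩ : MultL L)⁻¹ := rfl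
        rw [this, map_inv]
        exact inv_mem ihx
    have := key _ hmem
    rwa [show (⟨(φ k : Equiv.Perm L), hmem⟩ : MultL L) = φ k from rfl,
      MulEquiv.symm_apply_apply] at this
end

section
/- Let L be a loop with identity e and 𝒩 a normal subgroup of Mult(L). Then 𝒩 is contained in M(𝒩(e)) = { m ∈ Mult(L) : x·𝒩(e) = m(x)·𝒩(e) for all x ∈ L }. -/
open Pointwise

variable {L : Type*} [LoopStr L]

/-- A subloop of `L`: a subset containing the identity and closed under
multiplication and both divisions. -/
structure IsSubloop (N : Set L) : Prop where
  one_mem : (1 : L) ∈ N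
  mul_mem : ∀ a ∈ N, ∀ b ∈ N, a * b ∈ N
  ldiv_mem : ∀ a ∈ N, ∀ b ∈ N, ldivL a b ∈ N
  rdiv_mem : ∀ a ∈ N, ∀ b ∈ N, rdivL b a ∈ N

/-- A normal subloop: `xN = Nx`, `(xN)y = x(Ny)` and `x(yN) = (xy)N` for all `x, y`. -/
def IsNormalSubloop (N : Set L) : Prop :=
  IsSubloop N ∧ ∀ x y : L,
    ({x} : Set L) * N = N * {x} ∧
    (({x} : Set L) * N) * {y} = ({x} : Set L) * (N * {y}) ∧
    ({x} : Set L) * (({y} : Set L) * N) = (({x} : Set L) * {y}) * N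

/-- `M(N) = { m ∈ Mult(L) : xN = m(x)N for all x }`. -/
noncomputable def MClass (N : Set L) : Set (Equiv.Perm L) :=
  {m | m ∈ MultL L ∧ ∀ x : L, ({x} : Set L) * N = ({m x} : Set L) * N}

theorem normal_subgroup_le_MClass (N : Subgroup (MultL L)) [N.Normal] :
    ∀ n : MultL L, n ∈ N →
      (n : Equiv.Perm L) ∈ MClass {l : L | ∃ m : MultL L, m ∈ N ∧ (m : Equiv.Perm L) 1 = l} := by
  intro n hn
  have hNorm : N.Normal := ‹_›
  have hL : ∀ x : L, leftT x ∈ MultL L := fun x =>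
    Subgroup.subset_closure ⟨x, Or.inl rfl⟩
  have hLx1 : ∀ x : L, leftT x 1 = x := fun x => LoopStr.mul_one x
  have key : ∀ x : L,
      ({x} : Set L) * {l : L | ∃ m : MultL L, m ∈ N ∧ (m : Equiv.Perm L) 1 = l}
        = {l : L | ∃ m : MultL L, m ∈ N ∧ (m : Equiv.Perm L) x = l} := by
    intro x
    set Lx : MultL L := ⟨leftT x, hL x⟩ with hLxdef
    have hcoei : ((Lx⁻¹ : MultL L) : Equiv.Perm L) = ((Lx : Equiv.Perm L))⁻¹ := rfl
    have hinv : ((Lx⁻¹ : MultL L) : Equiv.Perm L) x = 1 := by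
      rw [hcoei, ← hLx1 x]
      exact Equiv.symm_apply_apply _ _
    ext z
    simp only [Set.mem_mul, Set.mem_singleton_iff, Set.mem_setOf_eq]
    constructor
    · rintro ⟨a, ha, b, ⟨m, hm, rfl⟩, rfl⟩
      subst ha
      refine ⟨Lx * m * Lx⁻¹, hNorm.conj_mem m hm Lx, ?_⟩
      have h2 : ((Lx * m * Lx⁻¹ : MultL L) : Equiv.Perm L) a
          = (Lx : Equiv.Perm L) ((m : Equiv.Perm L) (((Lx⁻¹ : MultL L) : Equiv.Perm L) a)) := rfl
      rw [h2, hinv]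
      rfl
    · rintro ⟨m, hm, rfl⟩
      refine ⟨x, rfl, ((Lx⁻¹ * m * Lx : MultL L) : Equiv.Perm L) 1,
        ⟨Lx⁻¹ * m * Lx, ?_, rfl⟩, ?_⟩
      · have := hNorm.conj_mem m hm Lx⁻¹
        simpa using this
      · have h1 : ((Lx⁻¹ * m * Lx : MultL L) : Equiv.Perm L) 1
            = ((Lx : Equiv.Perm L))⁻¹ ((m : Equiv.Perm L) ((Lx : Equiv.Perm L) 1)) := rfl
        have h3 : (Lx : Equiv.Perm L) 1 = x := hLx1 x
        have h4 : ∀ y : L, x * y = (Lx : Equiv.Perm L) y := fun y => rfl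
        rw [h1, h3, h4]
        exact Equiv.apply_symm_apply _ _
  refine ⟨n.2, fun x => ?_⟩
  rw [key, key]
  ext z
  simp only [Set.mem_setOf_eq]
  constructor
  · rintro ⟨m, hm, rfl⟩
    refine ⟨m * n⁻¹, N.mul_mem hm (N.inv_mem hn), ?_⟩
    have : ((m * n⁻¹ : MultL L) : Equiv.Perm L) ((n : Equiv.Perm L) x)
        = (m : Equiv.Perm L) (((n : Equiv.Perm L))⁻¹ ((n : Equiv.Perm L) x)) := rfl
    rw [this, Equiv.Perm.inv_def, Equiv.symm_apply_apply]
  · rintro ⟨m, hm, rfl⟩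
    exact ⟨m * n, N.mul_mem hm hn, rfl⟩
end
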